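/- (ADI residual update) Let $W^{(j-1)} \in \mathbb{R}^{n \times q}$ and suppose $Z^{(j-1)}$ satisfies $A^* Z^{(j-1)} (Z^{(j-1)})^* M + M^* Z^{(j-1)} (Z^{(j-1)})^* A + F F^* = W^{(j-1)} (W^{(j-1)})^*$ for a Lyapunov residual factor $W^{(j-1)}$. Define $V^{(j)} = (A + \alpha^{(j)} M)^{-*} W^{(j-1)}$ with $\mathrm{Re}(\alpha^{(j)}) < 0$, $W^{(j)} = W^{(j-1)} - 2\mathrm{Re}(\alpha^{(j)}) M^* V^{(j)}$, and $Z^{(j)} = [Z^{(j-1)}, \sqrt{-2\mathrm{Re}(\alpha^{(j)})} V^{(j)}]$. Then $A^* Z^{(j)} (Z^{(j)})^* M + M^* Z^{(j)} (Z^{(j)})^* A + F F^* = W^{(j)} (W^{(j)})^*$. -/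

import Mathlib

open Matrix

/-- LR-ADI residual invariant: one ADI step (real shift `α < 0`) preserves the
low-rank factorization of the Lyapunov residual. -/
theorem stmt13 {n q r : ℕ}
    (A M : Matrix (Fin n) (Fin n) ℝ) (F : Matrix (Fin n) (Fin q) ℝ)
    (Z : Matrix (Fin n) (Fin r) ℝ) (W V : Matrix (Fin n) (Fin q) ℝ)
    (α : ℝ) (hα : α < 0) (hinv : IsUnit (A + α • M))
    (hres : Aᵀ * (Z * Zᵀ) * M + Mᵀ * (Z * Zᵀ) * A + F * Fᵀ = W * Wᵀ)
    (hV : (A + α • M)ᵀ * V = W) :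
    let W' := W - (2 * α) • (Mᵀ * V)
    let Z' := fromCols Z (Real.sqrt (-(2 * α)) • V)
    Aᵀ * (Z' * Z'ᵀ) * M + Mᵀ * (Z' * Z'ᵀ) * A + F * Fᵀ = W' * W'ᵀ := by
  intro W' Z'
  have hsq : Real.sqrt (-(2 * α)) * Real.sqrt (-(2 * α)) = -(2 * α) :=
    Real.mul_self_sqrt (by linarith)
  have hZ : Z' * Z'ᵀ = Z * Zᵀ + (-(2 * α)) • (V * Vᵀ) := by
    show fromCols Z _ * (fromCols Z _)ᵀ = _
    rw [transpose_fromCols, fromCols_mul_fromRows, transpose_smul,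
      Matrix.smul_mul, Matrix.mul_smul, smul_smul, hsq]
  have hW : W = (A + α • M)ᵀ * V := hV.symm
  show Aᵀ * (Z' * Z'ᵀ) * M + Mᵀ * (Z' * Z'ᵀ) * A + F * Fᵀ
      = (W - (2 * α) • (Mᵀ * V)) * (W - (2 * α) • (Mᵀ * V))ᵀ
  rw [hZ, hW]
  simp only [transpose_add, transpose_smul, transpose_mul, transpose_transpose,
    Matrix.mul_add, Matrix.add_mul, Matrix.mul_smul, Matrix.smul_mul,
    Matrix.sub_mul, Matrix.mul_sub, transpose_sub, smul_smul, Matrix.mul_assoc]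
  have := hres
  rw [hW] at this
  simp only [transpose_add, transpose_smul, transpose_mul, transpose_transpose,
    Matrix.mul_add, Matrix.add_mul, Matrix.mul_smul, Matrix.smul_mul,
    smul_smul, Matrix.mul_assoc] at this
  linear_combination (norm := module) this
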